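/- Let R be an irreducible finite crystallographic root system of rank k in ℝ^k, and let S = R ∩ V be a complete irreducible subsystem of rank r < k, where V = span(S) is an r-dimensional subspace. Then there exists a subspace V′ ⊇ V of dimension r+1 such that S′ = R ∩ V′ is an irreducible root subsystem of rank r+1 containing S. -/
import Mathlib


open scoped RealInnerProductSpace

/-- `R` is a finite crystallographic root system in the subspace `W` of
`ℝ^k`. -/
def IsRootSystemIn {k : ℕ} (W : Submodule ℝ (EuclideanSpace ℝ (Fin k)))
    (R : Set (EuclideanSpace ℝ (Fin k))) : Prop :=
  R.Finite ∧ (0 : EuclideanSpace ℝ (Fin k)) ∉ R ∧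
  Submodule.span ℝ R = W ∧
  (∀ α ∈ R, ∀ β ∈ R, β - (2 * ⟪β, α⟫ / ⟪α, α⟫) • α ∈ R) ∧
  (∀ α ∈ R, ∀ β ∈ R, ∃ m : ℤ, 2 * ⟪β, α⟫ / ⟪α, α⟫ = (m : ℝ))

/-- `R` is irreducible: it cannot be written as the union of two complete
subsystems lying in subspaces meeting only in `0`. -/
def IsIrreducibleSys {k : ℕ} (R : Set (EuclideanSpace ℝ (Fin k))) : Prop :=
  ¬ ∃ V₁ V₂ : Submodule ℝ (EuclideanSpace ℝ (Fin k)),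
      V₁ ⊓ V₂ = ⊥ ∧ (R ∩ V₁).Nonempty ∧ (R ∩ V₂).Nonempty ∧ R ⊆ ↑V₁ ∪ ↑V₂

/-- Intersecting a root system with a subspace gives a root system, provided
it spans the subspace. -/
lemma isRootSystemIn_inter {k : ℕ} {R : Set (EuclideanSpace ℝ (Fin k))}
    (hR : IsRootSystemIn ⊤ R) (V' : Submodule ℝ (EuclideanSpace ℝ (Fin k)))
    (hs : Submodule.span ℝ (R ∩ V') = V') : IsRootSystemIn V' (R ∩ V') := by
  obtain ⟨hfin, h0, -, hrefl, hint⟩ := hR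
  refine ⟨hfin.subset Set.inter_subset_left, fun h => h0 h.1, hs, ?_, ?_⟩
  · rintro a ⟨haR, haV⟩ b ⟨hbR, hbV⟩
    exact ⟨hrefl a haR b hbR, V'.sub_mem hbV (V'.smul_mem _ haV)⟩
  · rintro a ⟨haR, -⟩ b ⟨hbR, -⟩
    exact hint a haR b hbR

theorem stmt_17 {k r : ℕ} (R : Set (EuclideanSpace ℝ (Fin k)))
    (hR : IsRootSystemIn ⊤ R) (hirr : IsIrreducibleSys R)
    (V : Submodule ℝ (EuclideanSpace ℝ (Fin k)))
    (hrk : Module.finrank ℝ V = r) (hr : r < k)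
    (hspan : Submodule.span ℝ (R ∩ V) = V)
    (hSirr : IsIrreducibleSys (R ∩ V)) :
    ∃ V' : Submodule ℝ (EuclideanSpace ℝ (Fin k)),
      V ≤ V' ∧ Module.finrank ℝ V' = r + 1 ∧
      Submodule.span ℝ (R ∩ V') = V' ∧
      IsRootSystemIn V' (R ∩ V') ∧
      IsIrreducibleSys (R ∩ V') := by
  obtain ⟨hfin, h0, hspanR, hrefl, hint⟩ := hR
  have hRne0 : ∀ x ∈ R, x ≠ 0 := fun x hx hx0 => h0 (hx0 ▸ hx)
  -- there is a root outside V
  have hne : ∃ α ∈ R, α ∉ V := by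
    by_contra h
    push_neg at h
    have hle : (⊤ : Submodule ℝ (EuclideanSpace ℝ (Fin k))) ≤ V := by
      rw [← hspanR]; exact Submodule.span_le.mpr h
    have hVtop : V = ⊤ := le_antisymm le_top hle
    rw [hVtop] at hrk
    rw [finrank_top, finrank_euclideanSpace_fin] at hrk
    omega
  by_cases hVbot : V = ⊥
  · -- rank zero case : take the line through any root
    have hr0 : r = 0 := by
      rw [← hrk, hVbot, finrank_bot]
    obtain ⟨α, hαR, -⟩ := hne
    have hα0 : α ≠ 0 := hRne0 α hαR
    refine ⟨Submodule.span ℝ {α}, hVbot ▸ bot_le, ?_, ?_, ?_, ?_⟩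
    · rw [finrank_span_singleton hα0, hr0]
    · refine le_antisymm (Submodule.span_le.mpr Set.inter_subset_right) ?_
      exact Submodule.span_le.mpr (Set.singleton_subset_iff.mpr
        (Submodule.subset_span ⟨hαR, Submodule.mem_span_singleton_self α⟩))
    · refine isRootSystemIn_inter ⟨hfin, h0, hspanR, hrefl, hint⟩ _ ?_
      refine le_antisymm (Submodule.span_le.mpr Set.inter_subset_right) ?_
      exact Submodule.span_le.mpr (Set.singleton_subset_iff.mpr
        (Submodule.subset_span ⟨hαR, Submodule.mem_span_singleton_self α⟩))
    · rintro ⟨V₁, V₂, hinf, ⟨x, ⟨hxR, hxL⟩, hxV₁⟩, ⟨y, ⟨hyR, hyL⟩, hyV₂⟩, -⟩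
      obtain ⟨a, ha⟩ := Submodule.mem_span_singleton.mp hxL
      obtain ⟨b, hb⟩ := Submodule.mem_span_singleton.mp hyL
      have ha0 : a ≠ 0 := by rintro rfl; exact hRne0 x hxR (by simp [← ha])
      have hb0 : b ≠ 0 := by rintro rfl; exact hRne0 y hyR (by simp [← hb])
      have hαV₁ : α ∈ V₁ := by
        have := V₁.smul_mem a⁻¹ hxV₁
        rwa [← ha, smul_smul, inv_mul_cancel₀ ha0, one_smul] at this
      have hαV₂ : α ∈ V₂ := by
        have := V₂.smul_mem b⁻¹ hyV₂
        rwa [← hb, smul_smul, inv_mul_cancel₀ hb0, one_smul] at this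
      have : α ∈ V₁ ⊓ V₂ := ⟨hαV₁, hαV₂⟩
      rw [hinf, Submodule.mem_bot] at this
      exact hα0 this
  · -- main case : V ≠ ⊥
    -- find a root outside V not orthogonal to V
    have hexα : ∃ α ∈ R, α ∉ V ∧ α ∉ Vᗮ := by
      by_contra h
      push_neg at h
      refine hirr ⟨V, Vᗮ, V.inf_orthogonal_eq_bot, ?_, ?_, ?_⟩
      · by_contra hemp
        rw [Set.not_nonempty_iff_eq_empty] at hemp
        rw [hemp, Submodule.span_empty] at hspan
        exact hVbot hspan.symm
      · obtain ⟨α, hαR, hαV⟩ := hne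
        exact ⟨α, hαR, h α hαR hαV⟩
      · intro x hx
        by_cases hxV : x ∈ V
        · exact Or.inl hxV
        · exact Or.inr (h x hx hxV)
    obtain ⟨α, hαR, hαV, hαperp⟩ := hexα
    have hα0 : α ≠ 0 := hRne0 α hαR
    set V' : Submodule ℝ (EuclideanSpace ℝ (Fin k)) := V ⊔ Submodule.span ℝ {α}
      with hV'def
    have hVV' : V ≤ V' := le_sup_left
    have hαV' : α ∈ V' := Submodule.mem_sup_right (Submodule.mem_span_singleton_self α)
    have hinfbot : V ⊓ Submodule.span ℝ {α} = ⊥ := by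
      rw [eq_bot_iff]
      rintro z ⟨hz1, hz2⟩
      obtain ⟨t, ht⟩ := Submodule.mem_span_singleton.mp hz2
      rcases eq_or_ne t 0 with rfl | ht0
      · rw [Submodule.mem_bot, ← ht, zero_smul]
      · exfalso
        apply hαV
        have := V.smul_mem t⁻¹ hz1
        rwa [← ht, smul_smul, inv_mul_cancel₀ ht0, one_smul] at this
    have hspan' : Submodule.span ℝ (R ∩ V') = V' := by
      refine le_antisymm (Submodule.span_le.mpr Set.inter_subset_right) ?_
      rw [hV'def]
      refine sup_le ?_ ?_
      · refine le_trans (le_of_eq hspan.symm) (Submodule.span_mono ?_)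
        exact fun x hx => ⟨hx.1, hVV' hx.2⟩
      · exact Submodule.span_le.mpr (Set.singleton_subset_iff.mpr
          (Submodule.subset_span ⟨hαR, hαV'⟩))
    refine ⟨V', hVV', ?_, hspan', isRootSystemIn_inter ⟨hfin, h0, hspanR, hrefl, hint⟩ _ hspan', ?_⟩
    · have := Submodule.finrank_sup_add_finrank_inf_eq V (Submodule.span ℝ {α})
      rw [hinfbot, finrank_bot, add_zero, hrk, finrank_span_singleton hα0] at this
      rw [← hV'def] at this
      exact this
    · -- irreducibility of R ∩ V'
      rintro ⟨V₁, V₂, hinf, hne1, hne2, hsub⟩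
      -- a key symmetric argument
      have key : ∀ W₁ W₂ : Submodule ℝ (EuclideanSpace ℝ (Fin k)),
          W₁ ⊓ W₂ = ⊥ → (R ∩ V' ⊆ ↑W₁ ∪ ↑W₂) →
          ((R ∩ V') ∩ ↑W₂).Nonempty → (R ∩ ↑V ∩ ↑W₂ : Set _) = ∅ → False := by
        rintro W₁ W₂ hinfW hcover ⟨y, ⟨hyR, hyV'⟩, hyW2⟩ hempty
        have hy0 : y ≠ 0 := hRne0 y hyR
        -- roots in W₁ are orthogonal to roots in W₂
        have orth : ∀ β ∈ R ∩ V', β ∈ W₁ → ∀ γ ∈ R ∩ V', γ ∈ W₂ → ⟪γ, β⟫ = 0 := by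
          rintro β hβ hβ1 γ hγ hγ2
          by_contra hc
          have hβ0 : β ≠ 0 := hRne0 β hβ.1
          have hββ : ⟪β, β⟫ ≠ 0 := fun h => hβ0 (inner_self_eq_zero.mp h)
          set c : ℝ := 2 * ⟪γ, β⟫ / ⟪β, β⟫ with hcdef
          have hc0 : c ≠ 0 := div_ne_zero (mul_ne_zero two_ne_zero hc) hββ
          have hδR : γ - c • β ∈ R := hrefl β hβ.1 γ hγ.1
          have hδV' : γ - c • β ∈ V' := V'.sub_mem hγ.2 (V'.smul_mem _ hβ.2)
          rcases hsubδ : hcover ⟨hδR, hδV'⟩ with hδ1 | hδ2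
          · -- then γ ∈ W₁ ⊓ W₂
            have hγ1 : γ ∈ W₁ := by
              have := W₁.add_mem hδ1 (W₁.smul_mem c hβ1)
              rwa [sub_add_cancel] at this
            have : γ ∈ W₁ ⊓ W₂ := ⟨hγ1, hγ2⟩
            rw [hinfW, Submodule.mem_bot] at this
            exact hRne0 γ hγ.1 this
          · -- then β ∈ W₁ ⊓ W₂
            have hcβ : c • β ∈ W₂ := by
              have := W₂.sub_mem hγ2 hδ2
              rwa [sub_sub_cancel] at this
            have hβ2 : β ∈ W₂ := by
              have := W₂.smul_mem c⁻¹ hcβ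
              rwa [smul_smul, inv_mul_cancel₀ hc0, one_smul] at this
            have : β ∈ W₁ ⊓ W₂ := ⟨hβ1, hβ2⟩
            rw [hinfW, Submodule.mem_bot] at this
            exact hβ0 this
        -- the old system lies in W₁
        have hSW1 : ∀ s ∈ R ∩ ↑V, s ∈ W₁ := by
          rintro s hs
          have hsV' : s ∈ R ∩ ↑V' := ⟨hs.1, hVV' hs.2⟩
          rcases hcover hsV' with h | h
          · exact h
          · exfalso
            have hmem : s ∈ (R ∩ ↑V ∩ ↑W₂ : Set _) := ⟨hs, h⟩
            rw [hempty] at hmem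
            exact hmem
        -- extend orthogonality from R ∩ V to V by span
        have perp_ext : ∀ z : EuclideanSpace ℝ (Fin k),
            (∀ s ∈ R ∩ ↑V, ⟪z, s⟫ = 0) → ∀ v ∈ V, ⟪z, v⟫ = 0 := by
          intro z hz v hv
          rw [← hspan] at hv
          induction hv using Submodule.span_induction with
          | mem x hx => exact hz x hx
          | zero => exact inner_zero_right z
          | add a b _ _ ha hb => rw [inner_add_right, ha, hb, add_zero]
          | smul t a _ ha => rw [real_inner_smul_right, ha, mul_zero]
        have hyperpV : ∀ v ∈ V, ⟪y, v⟫ = 0 :=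
          perp_ext y fun s hs =>
            orth s ⟨hs.1, hVV' hs.2⟩ (hSW1 s hs) y ⟨hyR, hyV'⟩ hyW2
        rcases hcover ⟨hαR, hαV'⟩ with hα1 | hα2
        · -- α ∈ W₁ : then y ⊥ V' so y = 0
          have hyα : ⟪y, α⟫ = 0 := orth α ⟨hαR, hαV'⟩ hα1 y ⟨hyR, hyV'⟩ hyW2
          obtain ⟨v, hv, w, hw, hvw⟩ := Submodule.mem_sup.mp (hV'def ▸ hyV')
          obtain ⟨t, ht⟩ := Submodule.mem_span_singleton.mp hw
          have hyy : ⟪y, y⟫ = 0 := by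
            calc ⟪y, y⟫ = ⟪y, v + t • α⟫ := by rw [ht, hvw]
              _ = ⟪y, v⟫ + t * ⟪y, α⟫ := by
                  rw [inner_add_right, real_inner_smul_right]
              _ = 0 := by rw [hyperpV v hv, hyα, mul_zero, add_zero]
          exact hy0 (inner_self_eq_zero.mp hyy)
        · -- α ∈ W₂ : then α ⊥ V, contradiction
          have hαperpV : ∀ v ∈ V, ⟪α, v⟫ = 0 :=
            perp_ext α fun s hs =>
              orth s ⟨hs.1, hVV' hs.2⟩ (hSW1 s hs) α ⟨hαR, hαV'⟩ hα2
          exact hαperp (Submodule.mem_orthogonal V α |>.mpr fun u hu =>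
            by rw [real_inner_comm]; exact hαperpV u hu)
      -- the old system cannot meet both parts
      have hnotboth : (R ∩ ↑V ∩ ↑V₁ : Set _) = ∅ ∨ (R ∩ ↑V ∩ ↑V₂ : Set _) = ∅ := by
        by_contra h
        push_neg at h
        refine hSirr ⟨V₁, V₂, hinf, ?_, ?_, ?_⟩
        · exact h.1
        · exact h.2
        · intro s hs
          exact hsub ⟨hs.1, hVV' hs.2⟩
      rcases hnotboth with h1 | h2
      · exact key V₂ V₁ (by rw [inf_comm, hinf])
          (fun z hz => (hsub hz).symm) hne1 h1
      · exact key V₁ V₂ hinf hsub hne2 h2
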